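/- Let d ≥ 2, let {𝒫^(b)}_{b=1}^{d+1} be a set of d+1 mutually unbiased measurements on ℂ^d with efficiency parameter κ, and let ρ be a density operator on ℂ^d. Then for every integer x with 1 ≤ x ≤ d−1, Σ_{b=1}^{d+1} H(𝒫^(b)|ρ) ≥ (d+1)[(x+1)log₂(x+1) − x log₂ x] − C(κ,ρ)·x(x+1)[log₂(x+1) − log₂ x], where C(κ,ρ) = Σ_{b=1}^{d+1} Σ_{n=1}^{d} (p_n^(b))². -/

import Mathlib

section HTaux
open Real Set


-- log z ≥ 1 - 1/z for z > 0
lemma log_ge_one_sub_inv {z : ℝ} (hz : 0 < z) : 1 - 1/z ≤ Real.log z := by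
  have h := Real.log_le_sub_one_of_pos (x := 1/z) (by positivity)
  rw [Real.log_div one_ne_zero (ne_of_gt hz)] at h
  rw [Real.log_one] at h
  simp only [one_div] at h ⊢
  linarith

noncomputable def An (x : ℕ) : ℝ := ((x:ℝ)+1) * Real.log ((x:ℝ)+1) - (x:ℝ) * Real.log (x:ℝ)
noncomputable def Bn (x : ℕ) : ℝ := (x:ℝ) * ((x:ℝ)+1) * (Real.log ((x:ℝ)+1) - Real.log (x:ℝ))

lemma B_ge {x : ℕ} (hx : 1 ≤ x) : (x:ℝ) ≤ Bn x := by
  have hX : (1:ℝ) ≤ (x:ℝ) := by exact_mod_cast hx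
  have hpos : (0:ℝ) < (x:ℝ) := by linarith
  have h : 1 - (x:ℝ)/((x:ℝ)+1) ≤ Real.log (((x:ℝ)+1)/(x:ℝ)) := by
    have := log_ge_one_sub_inv (z := ((x:ℝ)+1)/(x:ℝ)) (by positivity)
    have h1 : 1/(((x:ℝ)+1)/(x:ℝ)) = (x:ℝ)/((x:ℝ)+1) := by
      field_simp
    rwa [h1] at this
  have h2 : Real.log (((x:ℝ)+1)/(x:ℝ)) = Real.log ((x:ℝ)+1) - Real.log (x:ℝ) :=
    Real.log_div (by linarith) (ne_of_gt hpos)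
  rw [h2] at h
  have h3 : 1 - (x:ℝ)/((x:ℝ)+1) = 1/((x:ℝ)+1) := by field_simp; ring
  rw [h3] at h
  unfold Bn
  have : (x:ℝ) * ((x:ℝ)+1) * (1/((x:ℝ)+1)) ≤ (x:ℝ) * ((x:ℝ)+1) * (Real.log ((x:ℝ)+1) - Real.log (x:ℝ)) := by
    apply mul_le_mul_of_nonneg_left h (by positivity)
  calc (x:ℝ) = (x:ℝ) * ((x:ℝ)+1) * (1/((x:ℝ)+1)) := by field_simp
    _ ≤ _ := this

lemma B_le {x : ℕ} (hx : 1 ≤ x) : Bn x ≤ (x:ℝ) + 1 := by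
  have hX : (1:ℝ) ≤ (x:ℝ) := by exact_mod_cast hx
  have hpos : (0:ℝ) < (x:ℝ) := by linarith
  have h : Real.log (((x:ℝ)+1)/(x:ℝ)) ≤ ((x:ℝ)+1)/(x:ℝ) - 1 :=
    Real.log_le_sub_one_of_pos (by positivity)
  have h2 : Real.log (((x:ℝ)+1)/(x:ℝ)) = Real.log ((x:ℝ)+1) - Real.log (x:ℝ) :=
    Real.log_div (by linarith) (ne_of_gt hpos)
  rw [h2] at h
  have h3 : ((x:ℝ)+1)/(x:ℝ) - 1 = 1/(x:ℝ) := by field_simp; ring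
  rw [h3] at h
  unfold Bn
  have : (x:ℝ) * ((x:ℝ)+1) * (Real.log ((x:ℝ)+1) - Real.log (x:ℝ)) ≤ (x:ℝ) * ((x:ℝ)+1) * (1/(x:ℝ)) :=
    mul_le_mul_of_nonneg_left h (by positivity)
  calc Bn x ≤ (x:ℝ) * ((x:ℝ)+1) * (1/(x:ℝ)) := this
    _ = (x:ℝ) + 1 := by field_simp

lemma B_pos {x : ℕ} (hx : 1 ≤ x) : 0 < Bn x := by
  have hX : (1:ℝ) ≤ (x:ℝ) := by exact_mod_cast hx
  have := B_ge hx; linarith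

noncomputable def phi (x : ℕ) (s : ℝ) : ℝ := Real.log s - An x + Bn x / s
noncomputable def hfun (x : ℕ) (t : ℝ) : ℝ := Real.negMulLog t - An x * t + Bn x * t^2
noncomputable def hderiv (x : ℕ) (t : ℝ) : ℝ := -Real.log t - 1 - An x + 2 * Bn x * t


lemma phi_hasDeriv {x : ℕ} {s : ℝ} (hs : s ≠ 0) :
    HasDerivAt (phi x) ((s - Bn x)/s^2) s := by
  have h1 := (Real.hasDerivAt_log hs).sub_const (An x)
  have h2 := (hasDerivAt_inv hs).const_mul (Bn x)
  have h3 := h1.add h2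
  have hfn : (fun s : ℝ => Real.log s - An x + Bn x * s⁻¹) = phi x := by
    funext t; simp [phi, div_eq_mul_inv]
  rw [← hfn]
  refine h3.congr_deriv ?_
  field_simp
  ring

lemma phi_at_x {x : ℕ} (hx : 1 ≤ x) : phi x ((x:ℝ)) = 0 := by
  have hpos : (0:ℝ) < (x:ℝ) := by exact_mod_cast Nat.lt_of_lt_of_le Nat.zero_lt_one hx
  unfold phi An Bn
  field_simp
  ring

lemma phi_at_x1 {x : ℕ} (hx : 1 ≤ x) : phi x ((x:ℝ)+1) = 0 := by
  have hpos : (0:ℝ) < (x:ℝ) := by exact_mod_cast Nat.lt_of_lt_of_le Nat.zero_lt_one hx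
  unfold phi An Bn
  field_simp
  ring



lemma phi_cont {x : ℕ} {D : Set ℝ} (hD : ∀ s ∈ D, s ≠ 0) : ContinuousOn (phi x) D :=
  fun s hs => ((phi_hasDeriv (hD s hs)).differentiableAt.continuousAt).continuousWithinAt

lemma phi_int {x : ℕ} (hx : 1 ≤ x) (k : ℕ) (hk : 1 ≤ k) : 0 ≤ phi x (k:ℝ) := by
  have hk0 : (0:ℝ) < (k:ℝ) := by exact_mod_cast hk
  have hx0 : (0:ℝ) < (x:ℝ) := by exact_mod_cast hx
  rcases Nat.lt_or_ge x k with hcase | hcase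
  · -- x+1 ≤ k : monotone on Icc (x+1) k
    have hXk : ((x:ℝ)+1) ≤ (k:ℝ) := by exact_mod_cast hcase
    have hpos : ∀ s ∈ Icc ((x:ℝ)+1) (k:ℝ), s ≠ 0 := fun s hs => by
      have := hs.1; intro h; rw [h] at this; linarith
    have mono : MonotoneOn (phi x) (Icc ((x:ℝ)+1) (k:ℝ)) := by
      apply monotoneOn_of_deriv_nonneg (convex_Icc _ _) (phi_cont hpos)
      · intro s hs
        rw [interior_Icc] at hs
        exact ((phi_hasDeriv (by intro h; rw [h] at hs; exact absurd hs.1 (by push_neg; linarith))).differentiableAt).differentiableWithinAt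
      · intro s hs
        rw [interior_Icc] at hs
        have hs0 : s ≠ 0 := by intro h; rw [h] at hs; exact absurd hs.1 (by push_neg; linarith)
        rw [(phi_hasDeriv hs0).deriv]
        apply div_nonneg _ (sq_nonneg s)
        have := B_le hx
        linarith [hs.1]
    have := mono (left_mem_Icc.2 hXk) (right_mem_Icc.2 hXk) hXk
    rw [phi_at_x1 hx] at this
    linarith
  · -- k ≤ x : antitone on Icc k x
    have hkX : (k:ℝ) ≤ (x:ℝ) := by exact_mod_cast hcase
    have hpos : ∀ s ∈ Icc ((k:ℝ)) (x:ℝ), s ≠ 0 := fun s hs => by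
      have := hs.1; intro h; rw [h] at this; linarith
    have anti : AntitoneOn (phi x) (Icc ((k:ℝ)) (x:ℝ)) := by
      apply antitoneOn_of_deriv_nonpos (convex_Icc _ _) (phi_cont hpos)
      · intro s hs
        rw [interior_Icc] at hs
        exact ((phi_hasDeriv (by intro h; rw [h] at hs; exact absurd hs.1 (by push_neg; linarith))).differentiableAt).differentiableWithinAt
      · intro s hs
        rw [interior_Icc] at hs
        have hs0 : s ≠ 0 := by intro h; rw [h] at hs; exact absurd hs.1 (by push_neg; linarith)
        rw [(phi_hasDeriv hs0).deriv]
        apply div_nonpos_of_nonpos_of_nonneg _ (sq_nonneg s)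
        have := B_ge hx
        linarith [hs.2]
    have := anti (left_mem_Icc.2 hkX) (right_mem_Icc.2 hkX) hkX
    rw [phi_at_x hx] at this
    linarith

/-- If `f` is continuous on `[α,β]`, has derivative `g` on `[α,β)`, `g α = 0`,
`g` is concave on `[α,β)`, and `f` is nonneg at both endpoints, then `f ≥ 0` on `[α,β]`. -/
lemma shape_lemma {f g : ℝ → ℝ} {α β : ℝ} (hab : α < β)
    (hfc : ContinuousOn f (Icc α β))
    (hfd : ∀ t ∈ Ico α β, HasDerivAt f (g t) t)
    (hg0 : g α = 0) (hgconc : ConcaveOn ℝ (Ico α β) g)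
    (hfα : 0 ≤ f α) (hfβ : 0 ≤ f β) : ∀ t ∈ Icc α β, 0 ≤ f t := by
  intro c hc
  by_contra hneg
  push_neg at hneg
  have hcα : α < c := by
    rcases lt_or_eq_of_le hc.1 with h | h
    · exact h
    · exfalso; rw [← h] at hneg; linarith
  have hcβ : c < β := by
    rcases lt_or_eq_of_le hc.2 with h | h
    · exact h
    · exfalso; rw [h] at hneg; linarith
  -- MVT on [α, c]
  obtain ⟨ξ₁, hξ₁, hslope₁⟩ := exists_hasDerivAt_eq_slope f g hcα
    (hfc.mono (Icc_subset_Icc le_rfl hc.2))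
    (fun t ht => hfd t ⟨le_of_lt ht.1, lt_of_lt_of_le ht.2 hc.2⟩)
  -- MVT on [c, β]
  obtain ⟨ξ₂, hξ₂, hslope₂⟩ := exists_hasDerivAt_eq_slope f g hcβ
    (hfc.mono (Icc_subset_Icc hc.1 le_rfl))
    (fun t ht => hfd t ⟨le_trans hc.1 (le_of_lt ht.1), ht.2⟩)
  have hg₁neg : g ξ₁ < 0 := by
    rw [hslope₁]
    apply div_neg_of_neg_of_pos (by linarith) (by linarith)
  have hg₂pos : 0 < g ξ₂ := by
    rw [hslope₂]
    apply div_pos (by linarith) (by linarith)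
  -- concavity contradiction: ξ₁ between α and ξ₂
  have h12 : ξ₁ < ξ₂ := lt_trans hξ₁.2 hξ₂.1
  have hα1 : α < ξ₁ := hξ₁.1
  set w : ℝ := (ξ₂ - ξ₁)/(ξ₂ - α) with hw
  have hw0 : 0 < w := div_pos (by linarith) (by linarith)
  have hw1 : w < 1 := by
    rw [hw, div_lt_one (by linarith)]; linarith
  have hne : ξ₂ - α ≠ 0 := by intro h; rw [sub_eq_zero] at h; rw [h] at h12; linarith
  have hcomb : w • α + (1-w) • ξ₂ = ξ₁ := by
    simp only [smul_eq_mul, hw]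
    field_simp
    ring
  have hmemα : α ∈ Ico α β := ⟨le_rfl, hab⟩
  have hmemξ₂ : ξ₂ ∈ Ico α β := ⟨by linarith, by exact lt_of_lt_of_le hξ₂.2 (le_refl β)⟩
  have := hgconc.2 hmemα hmemξ₂ (show (0:ℝ) ≤ w from hw0.le)
    (show (0:ℝ) ≤ 1-w by linarith) (show w + (1-w) = 1 by ring)
  rw [hcomb, hg0] at this
  simp only [smul_eq_mul, mul_zero, zero_add] at this
  nlinarith




lemma hfun_zero (x : ℕ) : hfun x 0 = 0 := by simp [hfun]

lemma hfun_cont (x : ℕ) : Continuous (hfun x) := by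
  unfold hfun
  exact (Real.continuous_negMulLog.sub (continuous_const.mul continuous_id)).add
    (continuous_const.mul (continuous_pow 2))

lemma hfun_hasDeriv {x : ℕ} {s : ℝ} (hs : s ≠ 0) :
    HasDerivAt (hfun x) (-Real.log s - 1 - An x + 2 * Bn x * s) s := by
  have h1 := Real.hasDerivAt_negMulLog hs
  have h2 : HasDerivAt (fun t : ℝ => An x * t) (An x) s := by
    simpa using (hasDerivAt_id s).const_mul (An x)
  have h3 : HasDerivAt (fun t : ℝ => Bn x * t^2) (Bn x * (2*s)) s := by
    simpa using (hasDerivAt_pow 2 s).const_mul (Bn x)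
  have := (h1.sub h2).add h3
  refine this.congr_deriv ?_
  ring

lemma fk_nonneg {x : ℕ} (hx : 1 ≤ x) (k : ℕ) (hk : 1 ≤ k) {b : ℝ}
    (hb1 : 1/((k:ℝ)+1) ≤ b) (hb2 : b ≤ 1/(k:ℝ)) :
    0 ≤ hfun x (1 - (k:ℝ)*b) + (k:ℝ) * hfun x b := by
  have hK : (1:ℝ) ≤ (k:ℝ) := by exact_mod_cast hk
  have hK0 : (0:ℝ) < (k:ℝ) := by linarith
  set K : ℝ := (k:ℝ) with hKdef
  set α : ℝ := 1/(K+1) with hα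
  set β : ℝ := 1/K with hβ
  have hαβ : α < β := one_div_lt_one_div_of_lt hK0 (by linarith)
  have hα0 : 0 < α := by rw [hα]; positivity
  set f : ℝ → ℝ := fun b => hfun x (1 - K*b) + K * hfun x b with hf
  set g : ℝ → ℝ := fun b => K * (Real.log (1 - K*b) - Real.log b + 2*(Bn x)*((K+1)*b - 1)) with hg
  have hmem : ∀ t ∈ Ico α β, 0 < t ∧ 0 < 1 - K*t := by
    intro t ht
    refine ⟨by linarith [ht.1], ?_⟩
    have h1 : t < 1/K := ht.2
    have h2 : t*K < 1 := (lt_div_iff₀ hK0).1 h1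
    nlinarith
  have hfd : ∀ t ∈ Ico α β, HasDerivAt f (g t) t := by
    intro t ht
    obtain ⟨ht0, ha0⟩ := hmem t ht
    have hinner : HasDerivAt (fun s : ℝ => 1 - K*s) (-K) t := by
      simpa using ((hasDerivAt_id t).const_mul K).const_sub 1
    have h1 : HasDerivAt (fun s : ℝ => hfun x (1 - K*s))
        ((-Real.log (1-K*t) - 1 - An x + 2 * Bn x * (1-K*t)) * (-K)) t :=
      by simpa [Function.comp_def] using (hfun_hasDeriv (x := x) (ne_of_gt ha0)).comp t hinner
    have h2 : HasDerivAt (fun s : ℝ => K * hfun x s)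
        (K * (-Real.log t - 1 - An x + 2 * Bn x * t)) t :=
      (hfun_hasDeriv (ne_of_gt ht0)).const_mul K
    have h3 := h1.add h2
    refine h3.congr_deriv ?_
    rw [hg]
    ring
  have hKne : K + 1 ≠ 0 := by positivity
  have he1 : 1 - K*α = α := by rw [hα]; field_simp; ring
  have hg0 : g α = 0 := by
    have he2 : (K+1)*α - 1 = 0 := by rw [hα]; field_simp; ring
    show K * (Real.log (1 - K*α) - Real.log α + 2*(Bn x)*((K+1)*α - 1)) = 0
    rw [he1, he2]
    ring
  -- concavity of g on Ico α β
  have hgconc : ConcaveOn ℝ (Ico α β) g := by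
    apply concaveOn_of_hasDerivWithinAt2_nonpos
      (f' := fun t => K * (-(K/(1-K*t)) - 1/t + 2*(Bn x)*(K+1)))
      (f'' := fun t => K * (1/t^2 - K^2/(1-K*t)^2)) (convex_Ico α β)
    · -- continuity
      intro t ht
      obtain ⟨ht0, ha0⟩ := hmem t ht
      apply ContinuousAt.continuousWithinAt
      have c0 : ContinuousAt (fun s : ℝ => 1 - K*s) t := by fun_prop
      have c1 : ContinuousAt (fun s : ℝ => Real.log (1 - K*s)) t :=
        c0.log (ne_of_gt ha0)
      have c2 : ContinuousAt Real.log t := Real.continuousAt_log (ne_of_gt ht0)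
      have c3 : ContinuousAt (fun s : ℝ => 2*(Bn x)*((K+1)*s - 1)) t := by fun_prop
      exact ((c1.sub c2).add c3).const_mul K
    · -- first derivative
      intro t ht
      rw [interior_Ico] at ht
      obtain ⟨ht0, ha0⟩ := hmem t (Ioo_subset_Ico_self ht)
      apply HasDerivAt.hasDerivWithinAt
      have hinner : HasDerivAt (fun s : ℝ => 1 - K*s) (-K) t := by
        simpa using ((hasDerivAt_id t).const_mul K).const_sub 1
      have h1 : HasDerivAt (fun s : ℝ => Real.log (1 - K*s)) ((1-K*t)⁻¹ * (-K)) t :=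
        by simpa [Function.comp_def] using (Real.hasDerivAt_log (ne_of_gt ha0)).comp t hinner
      have h2 : HasDerivAt Real.log t⁻¹ t := Real.hasDerivAt_log (ne_of_gt ht0)
      have h3 : HasDerivAt (fun s : ℝ => 2*(Bn x)*((K+1)*s - 1)) (2*(Bn x)*(K+1)) t := by
        simpa using ((hasDerivAt_id t).const_mul (K+1)).sub_const 1 |>.const_mul (2*(Bn x))
      have h4 := ((h1.sub h2).add h3).const_mul K
      refine h4.congr_deriv ?_
      field_simp
    · -- second derivative
      intro t ht
      rw [interior_Ico] at ht
      obtain ⟨ht0, ha0⟩ := hmem t (Ioo_subset_Ico_self ht)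
      apply HasDerivAt.hasDerivWithinAt
      have hinner : HasDerivAt (fun s : ℝ => 1 - K*s) (-K) t := by
        simpa using ((hasDerivAt_id t).const_mul K).const_sub 1
      have h1 : HasDerivAt (fun s : ℝ => K/(1-K*s)) (K * (-((1-K*t)^2)⁻¹ * (-K))) t := by
        have := ((hasDerivAt_inv (ne_of_gt ha0)).comp t hinner).const_mul K
        simpa [div_eq_mul_inv] using this
      have h2 : HasDerivAt (fun s : ℝ => 1/s) (-(t^2)⁻¹) t := by
        simpa [one_div] using hasDerivAt_inv (ne_of_gt ht0)
      have h3 := ((h1.neg.sub h2).add_const (2*(Bn x)*(K+1))).const_mul K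
      have heq : (fun s : ℝ => K * (-(K/(1-K*s)) - 1/s + 2*(Bn x)*(K+1)))
          = fun s : ℝ => K * ((-(K/(1-K*s)) - 1/s) + 2*(Bn x)*(K+1)) := by
        funext s; ring
      rw [heq]
      refine h3.congr_deriv ?_
      field_simp
      ring
    · -- nonpositivity of second derivative
      intro t ht
      rw [interior_Ico] at ht
      obtain ⟨ht0, ha0⟩ := hmem t (Ioo_subset_Ico_self ht)
      have hhalf : 1/(2*K) ≤ t := by
        have : 1/(2*K) ≤ 1/(K+1) := by
          apply one_div_le_one_div_of_le (by positivity) (by linarith)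
        linarith [ht.1]
      have hab : 1 - K*t ≤ K*t := by
        have : 1 ≤ 2*K*t := by
          rw [div_le_iff₀ (by positivity)] at hhalf
          linarith
        linarith
      have hsq : (1-K*t)^2 ≤ (K*t)^2 := by nlinarith
      have hfrac : 1/t^2 ≤ K^2/(1-K*t)^2 := by
        rw [div_le_div_iff₀ (by positivity) (by positivity)]
        nlinarith
      have : 1/t^2 - K^2/(1-K*t)^2 ≤ 0 := by linarith
      exact mul_nonpos_of_nonneg_of_nonpos (by positivity) this
  -- endpoints
  have hlogα : Real.log α = -Real.log (K+1) := by rw [hα, one_div, Real.log_inv]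
  have hfα : 0 ≤ f α := by
    have hp := phi_int hx (k+1) (by omega)
    have hcast : ((k+1 : ℕ):ℝ) = K + 1 := by push_cast; ring
    rw [hcast] at hp
    unfold phi at hp
    have heq : f α = Real.log (K+1) - An x + Bn x/(K+1) := by
      show hfun x (1 - K*α) + K * hfun x α = _
      rw [he1]
      unfold hfun Real.negMulLog
      rw [hlogα, hα]
      field_simp
      ring
    linarith [heq ▸ hp]
  have hfβ : 0 ≤ f β := by
    have hp := phi_int hx k hk
    unfold phi at hp
    have he3 : 1 - K*β = 0 := by rw [hβ]; field_simp; ring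
    have hlogβ : Real.log β = -Real.log K := by rw [hβ, one_div, Real.log_inv]
    have heq : f β = Real.log K - An x + Bn x/K := by
      show hfun x (1 - K*β) + K * hfun x β = _
      rw [he3, hfun_zero]
      unfold hfun Real.negMulLog
      rw [hlogβ, hβ]
      field_simp
      ring
    linarith [heq ▸ hp]
  exact shape_lemma hαβ ((hfun_cont x).comp (by fun_prop) |>.add
    (continuous_const.mul (hfun_cont x))).continuousOn hfd hg0 hgconc hfα hfβ b ⟨hb1, hb2⟩
lemma hfun_hasDeriv' {x : ℕ} {s : ℝ} (hs : s ≠ 0) :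
    HasDerivAt (hfun x) (hderiv x s) s := hfun_hasDeriv hs



lemma hderiv_hasDeriv {x : ℕ} {t : ℝ} (ht : t ≠ 0) :
    HasDerivAt (hderiv x) (2 * Bn x - 1/t) t := by
  have h1 := ((Real.hasDerivAt_log ht).neg.sub_const 1).sub_const (An x)
  have h2 : HasDerivAt (fun s : ℝ => 2 * Bn x * s) (2 * Bn x) t := by
    simpa using (hasDerivAt_id t).const_mul (2 * Bn x)
  have h3 := h1.add h2
  have heq : (fun s : ℝ => -Real.log s - 1 - An x + 2 * Bn x * s) = hderiv x := by
    funext s; simp [hderiv]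
  rw [← heq]
  refine h3.congr_deriv ?_
  rw [one_div]
  ring

lemma hderiv_cont {x : ℕ} {D : Set ℝ} (hD : ∀ t ∈ D, t ≠ 0) : ContinuousOn (hderiv x) D :=
  fun t ht => ((hderiv_hasDeriv (hD t ht)).differentiableAt.continuousAt).continuousWithinAt

/-- strict antitonicity of hderiv on (0, 1/(2B)] -/
lemma hderiv_strictAnti {x : ℕ} (hx : 1 ≤ x) (hB : 0 < Bn x) :
    StrictAntiOn (hderiv x) (Ioc 0 (1/(2 * Bn x))) := by
  apply strictAntiOn_of_deriv_neg (convex_Ioc _ _)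
    (hderiv_cont (fun t ht => ne_of_gt ht.1))
  intro t ht
  rw [interior_Ioc] at ht
  rw [(hderiv_hasDeriv (ne_of_gt ht.1)).deriv]
  have h1 : t < 1/(2*Bn x) := ht.2
  have h2 : t * (2*Bn x) < 1 := (lt_div_iff₀ (by positivity)).1 h1
  have h4 : 2 * Bn x < 1/t := by
    rw [lt_div_iff₀ ht.1]
    linarith
  linarith

/-- strict monotonicity of hderiv on [1/(2B), ∞) -/
lemma hderiv_strictMono {x : ℕ} (hx : 1 ≤ x) (hB : 0 < Bn x) :
    StrictMonoOn (hderiv x) (Ici (1/(2 * Bn x))) := by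
  apply strictMonoOn_of_deriv_pos (convex_Ici _)
    (hderiv_cont (fun t ht => by
      have : 0 < t := lt_of_lt_of_le (by positivity) ht
      exact ne_of_gt this))
  intro t ht
  rw [interior_Ici] at ht
  have ht0 : 0 < t := lt_trans (by positivity) ht
  rw [(hderiv_hasDeriv (ne_of_gt ht0)).deriv]
  have h2 : 1 < t * (2*Bn x) := by
    have := (div_lt_iff₀ (by positivity : (0:ℝ) < 2*Bn x)).1 ht
    linarith
  have h4 : 1/t < 2 * Bn x := by
    rw [div_lt_iff₀ ht0]
    linarith
  linarith



/-- log((c+t)/(c-t)) > 4Bt for 0 < t < c ≤ 1/(2B). -/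
lemma artanh_bound {B c t : ℝ} (hB : 0 < B) (hc : c ≤ 1/(2*B)) (ht : 0 < t) (htc : t < c) :
    4*B*t < Real.log (c+t) - Real.log (c-t) := by
  have hc0 : 0 < c := lt_trans ht htc
  set ω : ℝ → ℝ := fun s => Real.log (c+s) - Real.log (c-s) - 4*B*s with hω
  have hmono : StrictMonoOn ω (Ico 0 c) := by
    apply strictMonoOn_of_deriv_pos (convex_Ico _ _)
    · intro s hs
      have h1 : 0 < c + s := by linarith [hs.1]
      have h2 : 0 < c - s := by linarith [hs.2]
      apply ContinuousAt.continuousWithinAt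
      have ca : ContinuousAt (fun s : ℝ => c + s) s := by fun_prop
      have cb : ContinuousAt (fun s : ℝ => c - s) s := by fun_prop
      exact ((ca.log (ne_of_gt h1)).sub (cb.log (ne_of_gt h2))).sub (by fun_prop)
    · intro s hs
      rw [interior_Ico] at hs
      have h1 : 0 < c + s := by linarith [hs.1]
      have h2 : 0 < c - s := by linarith [hs.2]
      have d1 : HasDerivAt (fun s : ℝ => Real.log (c+s)) (1/(c+s)) s := by
        have hi : HasDerivAt (fun s : ℝ => c + s) 1 s := by
          simpa using (hasDerivAt_id s).const_add c
        have := (Real.hasDerivAt_log (ne_of_gt h1)).comp s hi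
        simpa [one_div, Function.comp_def] using this
      have d2 : HasDerivAt (fun s : ℝ => Real.log (c-s)) (-(1/(c-s))) s := by
        have hi : HasDerivAt (fun s : ℝ => c - s) (-1) s := by
          simpa using (hasDerivAt_id s).const_sub c
        have := (Real.hasDerivAt_log (ne_of_gt h2)).comp s hi
        refine this.congr_deriv ?_
        field_simp
      have d3 : HasDerivAt (fun s : ℝ => 4*B*s) (4*B) s := by
        simpa using (hasDerivAt_id s).const_mul (4*B)
      have dω : HasDerivAt ω (1/(c+s) - (-(1/(c-s))) - 4*B) s := (d1.sub d2).sub d3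
      rw [dω.deriv]
      have key : 2/c < 1/(c+s) + 1/(c-s) := by
        rw [div_add_div _ _ (ne_of_gt h1) (ne_of_gt h2), div_lt_div_iff₀ hc0 (by positivity)]
        nlinarith [hs.1, hs.2]
      have key2 : 4*B ≤ 2/c := by
        rw [le_div_iff₀ hc0]
        have := (le_div_iff₀ (by positivity : (0:ℝ) < 2*B)).1 hc
        linarith
      linarith
  have h0 : ω 0 = 0 := by simp [hω]
  have := hmono (show (0:ℝ) ∈ Ico 0 c from ⟨le_rfl, hc0⟩) (show t ∈ Ico 0 c from ⟨ht.le, htc⟩) ht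
  rw [h0] at this
  simp only [hω] at this
  linarith

/-- Perturbing two positive coordinates of a minimizer gives a 1-D local minimum at 0. -/
lemma pert_localmin {x : ℕ} {n : ℕ} {q : Fin n → ℝ}
    (hqS : q ∈ stdSimplex ℝ (Fin n))
    (hqmin : IsMinOn (fun r : Fin n → ℝ => ∑ i, hfun x (r i)) (stdSimplex ℝ (Fin n)) q)
    {i j : Fin n} (hij : i ≠ j) (hi : 0 < q i) (hj : 0 < q j) :
    IsLocalMin (fun t => hfun x (q i + t) + hfun x (q j - t)) 0 := by
  have hδ : 0 < min (q i) (q j) := lt_min hi hj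
  have hmem : Ioo (-(min (q i) (q j))) (min (q i) (q j)) ∈ nhds (0:ℝ) :=
    Ioo_mem_nhds (by linarith) hδ
  filter_upwards [hmem] with t ht
  set r : Fin n → ℝ := fun l => q l + t * ((if l = i then 1 else 0) - (if l = j then 1 else 0))
    with hr
  have hri : r i = q i + t := by simp [hr, hij]
  have hrj : r j = q j - t := by
    simp [hr, if_neg (Ne.symm hij)]
    ring
  have hrother : ∀ l, l ≠ i → l ≠ j → r l = q l := by
    intro l hli hlj
    simp [hr, if_neg hli, if_neg hlj]
  have hrS : r ∈ stdSimplex ℝ (Fin n) := by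
    constructor
    · intro l
      rcases eq_or_ne l i with rfl | hli
      · rw [hri]; have := ht.1; have : -(q l) < t := by
          have hm : min (q l) (q j) ≤ q l := min_le_left _ _
          linarith [ht.1]
        linarith
      rcases eq_or_ne l j with rfl | hlj
      · rw [hrj]; have hm : min (q i) (q l) ≤ q l := min_le_right _ _
        linarith [ht.2]
      · rw [hrother l hli hlj]; exact hqS.1 l
    · show ∑ l, r l = 1
      simp only [hr]
      rw [Finset.sum_add_distrib, hqS.2, ← Finset.mul_sum, Finset.sum_sub_distrib]
      simp [Finset.sum_ite_eq']
  have hmin := isMinOn_iff.mp hqmin r hrS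
  have hdiff : ∑ l, hfun x (r l) - ∑ l, hfun x (q l)
      = hfun x (q i + t) + hfun x (q j - t) - (hfun x (q i) + hfun x (q j)) := by
    rw [← Finset.sum_sub_distrib]
    have hzero : ∑ l, (hfun x (r l) - hfun x (q l))
        = ∑ l ∈ ({i, j} : Finset (Fin n)), (hfun x (r l) - hfun x (q l)) := by
      apply (Finset.sum_subset (Finset.subset_univ _) ?_).symm
      intro l _ hl
      simp only [Finset.mem_insert, Finset.mem_singleton] at hl
      push_neg at hl
      rw [hrother l hl.1 hl.2, sub_self]
    rw [hzero, Finset.sum_pair hij, hri, hrj]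
    ring
  simp only [add_zero, sub_zero]
  linarith [hmin, hdiff]



/-- At a minimizer, any two positive coordinates have equal hderiv. -/
lemma deriv_equal {x : ℕ} {n : ℕ} {q : Fin n → ℝ}
    (hqS : q ∈ stdSimplex ℝ (Fin n))
    (hqmin : IsMinOn (fun r : Fin n → ℝ => ∑ i, hfun x (r i)) (stdSimplex ℝ (Fin n)) q)
    {i j : Fin n} (hij : i ≠ j) (hi : 0 < q i) (hj : 0 < q j) :
    hderiv x (q i) = hderiv x (q j) := by
  have hloc := pert_localmin hqS hqmin hij hi hj
  have h1 : HasDerivAt (fun t : ℝ => hfun x (q i + t)) (hderiv x (q i)) 0 := by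
    have hi' : HasDerivAt (fun t : ℝ => q i + t) 1 0 := by
      simpa using (hasDerivAt_id (0:ℝ)).const_add (q i)
    have := (hfun_hasDeriv' (x := x) (by simpa using ne_of_gt hi : q i + 0 ≠ 0)).comp 0 hi'
    simpa [Function.comp_def] using this
  have h2 : HasDerivAt (fun t : ℝ => hfun x (q j - t)) (-(hderiv x (q j))) 0 := by
    have hj' : HasDerivAt (fun t : ℝ => q j - t) (-1) 0 := by
      simpa using (hasDerivAt_id (0:ℝ)).const_sub (q j)
    have := (hfun_hasDeriv' (x := x) (by simpa using ne_of_gt hj : q j - 0 ≠ 0)).comp 0 hj'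
    simpa [Function.comp_def] using this
  have hd := (h1.add h2).deriv
  have h0 := hloc.deriv_eq_zero
  replace h0 := hd.symm.trans h0
  linarith

/-- At a minimizer, there are no two distinct small positive coordinates. -/
lemma no_two_small {x : ℕ} (hx : 1 ≤ x) {n : ℕ} {q : Fin n → ℝ}
    (hqS : q ∈ stdSimplex ℝ (Fin n))
    (hqmin : IsMinOn (fun r : Fin n → ℝ => ∑ i, hfun x (r i)) (stdSimplex ℝ (Fin n)) q)
    {i j : Fin n} (hij : i ≠ j) (hi : 0 < q i) (him : q i ≤ 1/(2 * Bn x))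
    (hj : 0 < q j) (hjm : q j ≤ 1/(2 * Bn x)) : False := by
  have hB : 0 < Bn x := lt_of_lt_of_le (by exact_mod_cast hx) (B_ge hx)
  rcases eq_or_ne (q i) (q j) with heq | hne
  · -- equal small coordinates: strict local improvement
    have hloc := pert_localmin hqS hqmin hij hi hj
    set φ : ℝ → ℝ := fun t => hfun x (q i + t) + hfun x (q j - t) with hφ
    have hφcont : Continuous φ := by
      have c1 : Continuous (fun t : ℝ => hfun x (q i + t)) :=
        (hfun_cont x).comp (continuous_const.add continuous_id)
      have c2 : Continuous (fun t : ℝ => hfun x (q j - t)) :=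
        (hfun_cont x).comp (continuous_const.sub continuous_id)
      exact c1.add c2
    have hanti : StrictAntiOn φ (Ico 0 (q i)) := by
      apply strictAntiOn_of_deriv_neg (convex_Ico _ _) hφcont.continuousOn
      intro t ht
      rw [interior_Ico] at ht
      have h1pos : 0 < q i + t := by linarith [ht.1]
      have h2pos : 0 < q j - t := by rw [← heq]; linarith [ht.2]
      have d1 : HasDerivAt (fun s : ℝ => hfun x (q i + s)) (hderiv x (q i + t)) t := by
        have hi' : HasDerivAt (fun s : ℝ => q i + s) 1 t := by
          simpa using (hasDerivAt_id t).const_add (q i)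
        simpa [Function.comp_def] using (hfun_hasDeriv' (x := x) (ne_of_gt h1pos)).comp t hi'
      have d2 : HasDerivAt (fun s : ℝ => hfun x (q j - s)) (-(hderiv x (q j - t))) t := by
        have hj' : HasDerivAt (fun s : ℝ => q j - s) (-1) t := by
          simpa using (hasDerivAt_id t).const_sub (q j)
        simpa [Function.comp_def] using (hfun_hasDeriv' (x := x) (ne_of_gt h2pos)).comp t hj'
      have hdφ : HasDerivAt φ (hderiv x (q i + t) + -(hderiv x (q j - t))) t := d1.add d2
      rw [hdφ.deriv]
      have hart := artanh_bound hB him ht.1 ht.2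
      rw [← heq]
      simp only [hderiv]
      nlinarith [hart]
    -- contradiction with local min
    obtain ⟨ε, hε, hball⟩ := Metric.eventually_nhds_iff.mp hloc
    set t0 := min (q i/2) (ε/2) with ht0
    have ht0pos : 0 < t0 := lt_min (by linarith) (by linarith)
    have ht0c : t0 < q i := lt_of_le_of_lt (min_le_left _ _) (by linarith)
    have h1 := hanti (show (0:ℝ) ∈ Ico 0 (q i) from ⟨le_rfl, hi⟩)
      (show t0 ∈ Ico 0 (q i) from ⟨ht0pos.le, ht0c⟩) ht0pos
    have h2 := hball (y := t0) (by
      simp only [Real.dist_eq, sub_zero]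
      rw [abs_of_pos ht0pos]
      exact lt_of_le_of_lt (min_le_right _ _) (by linarith))
    simp only [hφ, add_zero, sub_zero] at h1 h2
    linarith
  · -- distinct small coordinates: hderiv strictly antitone contradicts equality
    have heq := deriv_equal hqS hqmin hij hi hj
    rcases lt_or_gt_of_ne hne with hlt | hlt
    · have := hderiv_strictAnti hx hB (show q i ∈ Ioc 0 _ from ⟨hi, him⟩)
        (show q j ∈ Ioc 0 _ from ⟨hj, hjm⟩) hlt
      linarith
    · have := hderiv_strictAnti hx hB (show q j ∈ Ioc 0 _ from ⟨hj, hjm⟩)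
        (show q i ∈ Ioc 0 _ from ⟨hi, him⟩) hlt
      linarith

/-- At a minimizer, any two big coordinates are equal. -/
lemma bigs_equal {x : ℕ} (hx : 1 ≤ x) {n : ℕ} {q : Fin n → ℝ}
    (hqS : q ∈ stdSimplex ℝ (Fin n))
    (hqmin : IsMinOn (fun r : Fin n → ℝ => ∑ i, hfun x (r i)) (stdSimplex ℝ (Fin n)) q)
    {i j : Fin n} (hi : 1/(2 * Bn x) < q i) (hj : 1/(2 * Bn x) < q j) :
    q i = q j := by
  have hB : 0 < Bn x := lt_of_lt_of_le (by exact_mod_cast hx) (B_ge hx)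
  rcases eq_or_ne i j with rfl | hij
  · rfl
  by_contra hne
  have hipos : 0 < q i := lt_trans (by positivity) hi
  have hjpos : 0 < q j := lt_trans (by positivity) hj
  have heq := deriv_equal hqS hqmin hij hipos hjpos
  rcases lt_or_gt_of_ne hne with hlt | hlt
  · have := hderiv_strictMono hx hB (show q i ∈ Ici _ from hi.le)
      (show q j ∈ Ici _ from hj.le) hlt
    linarith
  · have := hderiv_strictMono hx hB (show q j ∈ Ici _ from hj.le)
      (show q i ∈ Ici _ from hi.le) hlt
    linarith



theorem sum_hfun_nonneg {x : ℕ} (hx : 1 ≤ x) {n : ℕ} (p : Fin n → ℝ)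
    (hp : p ∈ stdSimplex ℝ (Fin n)) : 0 ≤ ∑ i, hfun x (p i) := by
  have hcont : Continuous (fun r : Fin n → ℝ => ∑ i, hfun x (r i)) :=
    continuous_finset_sum _ fun i _ => (hfun_cont x).comp (continuous_apply i)
  obtain ⟨q, hqS, hqmin⟩ := (isCompact_stdSimplex ℝ (Fin n)).exists_isMinOn ⟨p, hp⟩
    hcont.continuousOn
  suffices hkey : 0 ≤ ∑ i, hfun x (q i) by
    exact le_trans hkey (isMinOn_iff.mp hqmin p hp)
  -- setup
  have hB : 0 < Bn x := lt_of_lt_of_le (by exact_mod_cast hx) (B_ge hx)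
  set m : ℝ := 1/(2 * Bn x) with hm
  have hm0 : 0 < m := by positivity
  have hm1 : m < 1 := by
    rw [hm, div_lt_one (by positivity)]
    have : (1:ℝ) ≤ (x:ℝ) := by exact_mod_cast hx
    linarith [B_ge hx]
  have hq0 : ∀ i, 0 ≤ q i := hqS.1
  have hq1 : ∑ i, q i = 1 := hqS.2
  classical
  set T : Finset (Fin n) := Finset.univ.filter (fun i => m < q i) with hT
  set Sm : Finset (Fin n) := Finset.univ.filter (fun i => 0 < q i ∧ q i ≤ m) with hSm
  -- T is nonempty
  have hTne : T.Nonempty := by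
    by_contra hemp
    rw [Finset.not_nonempty_iff_eq_empty] at hemp
    have hall : ∀ i, q i ≤ m := by
      intro i
      by_contra hgt
      push_neg at hgt
      have : i ∈ T := by rw [hT]; simp [hgt]
      rw [hemp] at this
      exact absurd this (Finset.notMem_empty i)
    -- there is a positive coordinate
    have hex : ∃ i, 0 < q i := by
      by_contra hno
      push_neg at hno
      have : ∑ i, q i ≤ 0 := Finset.sum_nonpos fun i _ => hno i
      linarith
    obtain ⟨i0, hi0⟩ := hex
    have honly : ∀ l, l ≠ i0 → q l = 0 := by
      intro l hl
      rcases lt_or_eq_of_le (hq0 l) with hpos | hzero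
      · exact absurd (no_two_small hx hqS hqmin hl hpos (hall l) hi0 (hall i0)) not_false
      · exact hzero.symm
    have : ∑ i, q i = q i0 := by
      apply Finset.sum_eq_single i0 (fun l _ hl => honly l hl) (fun h => absurd (Finset.mem_univ i0) h)
    rw [hq1] at this
    have := hall i0
    linarith
  obtain ⟨i₀, hi₀T⟩ := hTne
  have hi₀big : m < q i₀ := by
    rw [hT] at hi₀T; exact (Finset.mem_filter.mp hi₀T).2
  set b : ℝ := q i₀ with hb
  have hTval : ∀ i ∈ T, q i = b := by
    intro i hi
    rw [hT] at hi
    exact bigs_equal hx hqS hqmin (Finset.mem_filter.mp hi).2 hi₀big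
  set k : ℕ := T.card with hk
  have hk1 : 1 ≤ k := Finset.card_pos.mpr ⟨i₀, hi₀T⟩
  -- Sm has at most one element; a := its total
  set a : ℝ := ∑ i ∈ Sm, q i with ha
  have haS : a ≤ m ∧ 0 ≤ a := by
    rcases Finset.eq_empty_or_nonempty Sm with hemp | ⟨i1, hi1⟩
    · rw [ha, hemp]; simp [hm0.le]
    · have huniq : Sm = {i1} := by
        apply Finset.eq_singleton_iff_unique_mem.mpr
        refine ⟨hi1, fun j hj => ?_⟩
        by_contra hne
        have h1 := Finset.mem_filter.mp hi1
        have h2 := Finset.mem_filter.mp hj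
        exact no_two_small hx hqS hqmin hne h2.2.1 h2.2.2 h1.2.1 h1.2.2
      rw [ha, huniq, Finset.sum_singleton]
      have := Finset.mem_filter.mp hi1
      exact ⟨this.2.2, this.2.1.le⟩
  -- coordinates outside T ∪ Sm are zero
  have hzero : ∀ l, l ∉ T → l ∉ Sm → q l = 0 := by
    intro l hlT hlS
    rw [hT, Finset.mem_filter] at hlT
    rw [hSm, Finset.mem_filter] at hlS
    push_neg at hlT hlS
    have h1 : q l ≤ m := hlT (Finset.mem_univ l)
    rcases lt_or_eq_of_le (hq0 l) with hpos | h
    · exact absurd h1 (by simpa using (hlS (Finset.mem_univ l)) hpos)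
    · exact h.symm
  -- disjointness of T and Sm
  have hdisj : Disjoint T Sm := by
    rw [Finset.disjoint_left]
    intro i hiT hiS
    rw [hT, Finset.mem_filter] at hiT
    rw [hSm, Finset.mem_filter] at hiS
    linarith [hiT.2, hiS.2.2]
  -- sum decomposition
  have hsplit : ∀ f : ℝ → ℝ, f 0 = 0 → ∑ i, f (q i) = (k:ℝ) * f b + ∑ i ∈ Sm, f (q i) := by
    intro f hf0
    have h1 : ∑ i, f (q i) = ∑ i ∈ T ∪ Sm, f (q i) := by
      apply (Finset.sum_subset (Finset.subset_univ _) ?_).symm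
      intro l _ hl
      rw [Finset.mem_union] at hl
      push_neg at hl
      rw [hzero l hl.1 hl.2, hf0]
    rw [h1, Finset.sum_union hdisj]
    congr 1
    rw [Finset.sum_congr rfl (fun i hi => by rw [hTval i hi]), Finset.sum_const, nsmul_eq_mul]
  -- mass equation : k*b + a = 1
  have hmass : (k:ℝ) * b + a = 1 := by
    have := hsplit id rfl
    simp only [id] at this
    rw [← hq1, this, ha]
  -- b bounds
  have hK0 : (0:ℝ) < (k:ℝ) := by exact_mod_cast hk1
  have hb2 : b ≤ 1/(k:ℝ) := by
    rw [le_div_iff₀ hK0]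
    nlinarith [haS.2]
  have hb1 : 1/((k:ℝ)+1) ≤ b := by
    rw [div_le_iff₀ (by positivity)]
    have hab : a ≤ b := le_trans haS.1 (le_of_lt hi₀big)
    nlinarith
  -- conclude
  have hval := hsplit (hfun x) (hfun_zero x)
  have hSmsum : ∑ i ∈ Sm, hfun x (q i) = hfun x a := by
    rcases Finset.eq_empty_or_nonempty Sm with hemp | ⟨i1, hi1⟩
    · rw [ha, hemp]; simp [hfun_zero]
    · have huniq : Sm = {i1} := by
        apply Finset.eq_singleton_iff_unique_mem.mpr
        refine ⟨hi1, fun j hj => ?_⟩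
        by_contra hne
        have h1 := Finset.mem_filter.mp hi1
        have h2 := Finset.mem_filter.mp hj
        exact no_two_small hx hqS hqmin hne h2.2.1 h2.2.2 h1.2.1 h1.2.2
      rw [ha, huniq, Finset.sum_singleton, Finset.sum_singleton]
  have hfinal := fk_nonneg hx k hk1 hb1 hb2
  have haeq : 1 - (k:ℝ)*b = a := by linarith
  rw [haeq] at hfinal
  rw [hval, hSmsum]
  linarith



lemma HT_logb {x : ℕ} (hx : 1 ≤ x) {n : ℕ} (p : Fin n → ℝ)
    (h0 : ∀ i, 0 ≤ p i) (h1 : ∑ i, p i = 1) :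
    ((x:ℝ)+1) * Real.logb 2 ((x:ℝ)+1) - (x:ℝ) * Real.logb 2 (x:ℝ)
      - (∑ i, (p i)^2) * ((x:ℝ) * ((x:ℝ)+1) * (Real.logb 2 ((x:ℝ)+1) - Real.logb 2 (x:ℝ)))
    ≤ -∑ i, p i * Real.logb 2 (p i) := by
  have hkey := sum_hfun_nonneg hx p ⟨h0, h1⟩
  have hexp : ∑ i, hfun x (p i)
      = (∑ i, Real.negMulLog (p i)) - An x + Bn x * ∑ i, (p i)^2 := by
    unfold hfun
    rw [Finset.sum_add_distrib, Finset.sum_sub_distrib, ← Finset.mul_sum, ← Finset.mul_sum, h1,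
      mul_one]
  have key2 : An x - Bn x * ∑ i, (p i)^2 ≤ ∑ i, Real.negMulLog (p i) := by
    rw [hexp] at hkey; linarith
  have hlog2 : (0:ℝ) < Real.log 2 := Real.log_pos (by norm_num)
  have hgoalL : ((x:ℝ)+1) * Real.logb 2 ((x:ℝ)+1) - (x:ℝ) * Real.logb 2 (x:ℝ)
      - (∑ i, (p i)^2) * ((x:ℝ) * ((x:ℝ)+1) * (Real.logb 2 ((x:ℝ)+1) - Real.logb 2 (x:ℝ)))
      = (An x - Bn x * ∑ i, (p i)^2) / Real.log 2 := by
    simp only [Real.logb]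
    unfold An Bn
    field_simp
  have hgoalR : -∑ i, p i * Real.logb 2 (p i) = (∑ i, Real.negMulLog (p i)) / Real.log 2 := by
    simp only [Real.logb, Real.negMulLog_eq_neg]
    rw [Finset.sum_div, ← Finset.sum_neg_distrib]
    apply Finset.sum_congr rfl
    intro i _
    ring
  rw [hgoalL, hgoalR]
  exact (div_le_div_iff_of_pos_right hlog2).mpr key2
end HTaux

open Matrix Finset Real
open scoped ComplexOrder

lemma trace_nonneg_of_psd {d : ℕ} {M : Matrix (Fin d) (Fin d) ℂ} (hM : M.PosSemidef) :
    0 ≤ M.trace := by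
  rw [Matrix.trace]
  apply Finset.sum_nonneg
  intro i _
  have h := hM.2 (Finsupp.single i 1)
  simpa [Finsupp.sum_single_index] using h

theorem stmt4 (d : ℕ) (hd : 2 ≤ d) (κ : ℝ)
    (hκ1 : 1 / (d : ℝ) < κ) (hκ2 : κ ≤ 1)
    (P : Fin (d + 1) → Fin d → Matrix (Fin d) (Fin d) ℂ)
    (hpsd : ∀ b n, (P b n).PosSemidef)
    (hsum : ∀ b, ∑ n, P b n = 1)
    (htr1 : ∀ b n, (P b n).trace = 1)
    (htr2 : ∀ b b', b ≠ b' → ∀ n n', (P b n * P b' n').trace = ((1 / (d : ℝ) : ℝ) : ℂ))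
    (htr3 : ∀ b n n', (P b n * P b n').trace =
      if n = n' then ((κ : ℝ) : ℂ) else (((1 - κ) / ((d : ℝ) - 1) : ℝ) : ℂ))
    (ρ : Matrix (Fin d) (Fin d) ℂ) (hρ : ρ.PosSemidef) (hρtr : ρ.trace = 1)
    (p : Fin (d + 1) → Fin d → ℝ)
    (hp : ∀ b n, ((p b n : ℝ) : ℂ) = (P b n * ρ).trace) :
    ∀ x : ℕ, 1 ≤ x → x ≤ d - 1 →
      ∑ b, (-∑ n, p b n * Real.logb 2 (p b n)) ≥
        ((d : ℝ) + 1) * (((x : ℝ) + 1) * Real.logb 2 ((x : ℝ) + 1) - (x : ℝ) * Real.logb 2 (x : ℝ)) -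
          (∑ b, ∑ n, (p b n) ^ 2) * (x : ℝ) * ((x : ℝ) + 1) *
            (Real.logb 2 ((x : ℝ) + 1) - Real.logb 2 (x : ℝ)) := by
  intro x hx1 _
  -- nonnegativity of probabilities
  have hpnn : ∀ b n, 0 ≤ p b n := by
    intro b n
    rw [← Complex.zero_le_real, hp b n]
    obtain ⟨B, hB⟩ := (by
        open scoped MatrixOrder in
        exact ⟨CFC.sqrt ρ, by
          have h0 : (0 : Matrix (Fin d) (Fin d) ℂ) ≤ ρ := Matrix.nonneg_iff_posSemidef.mpr hρ
          have hs : (CFC.sqrt ρ)ᴴ = CFC.sqrt ρ := (CFC.sqrt_nonneg ρ).isSelfAdjoint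
          rw [hs, CFC.sqrt_mul_sqrt_self ρ h0]⟩ : ∃ B : Matrix (Fin d) (Fin d) ℂ, ρ = Bᴴ * B)
    rw [hB, ← Matrix.mul_assoc, Matrix.trace_mul_comm, ← Matrix.mul_assoc]
    exact trace_nonneg_of_psd ((hpsd b n).mul_mul_conjTranspose_same B)
  -- normalization
  have hpsum : ∀ b, ∑ n, p b n = 1 := by
    intro b
    have h : ((∑ n, p b n : ℝ) : ℂ) = 1 := by
      push_cast
      rw [Finset.sum_congr rfl (fun n _ => hp b n), ← Matrix.trace_sum, ← Finset.sum_mul, hsum b,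
        Matrix.one_mul, hρtr]
    exact_mod_cast h
  -- per-basis entropy bound, summed
  have hb : ∀ b : Fin (d+1),
      ((x:ℝ)+1) * Real.logb 2 ((x:ℝ)+1) - (x:ℝ) * Real.logb 2 (x:ℝ)
        - (∑ n, (p b n)^2) * ((x:ℝ) * ((x:ℝ)+1) * (Real.logb 2 ((x:ℝ)+1) - Real.logb 2 (x:ℝ)))
      ≤ -∑ n, p b n * Real.logb 2 (p b n) :=
    fun b => HT_logb hx1 (p b) (hpnn b) (hpsum b)
  have hsumall := Finset.sum_le_sum (fun b (_ : b ∈ Finset.univ) => hb b)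
  rw [ge_iff_le]
  calc ((d : ℝ) + 1) * (((x : ℝ) + 1) * Real.logb 2 ((x : ℝ) + 1) - (x : ℝ) * Real.logb 2 (x : ℝ)) -
          (∑ b, ∑ n, (p b n) ^ 2) * (x : ℝ) * ((x : ℝ) + 1) *
            (Real.logb 2 ((x : ℝ) + 1) - Real.logb 2 (x : ℝ))
      = ∑ b : Fin (d+1), (((x:ℝ)+1) * Real.logb 2 ((x:ℝ)+1) - (x:ℝ) * Real.logb 2 (x:ℝ)
        - (∑ n, (p b n)^2) * ((x:ℝ) * ((x:ℝ)+1) * (Real.logb 2 ((x:ℝ)+1) - Real.logb 2 (x:ℝ)))) := by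
        rw [Finset.sum_sub_distrib, Finset.sum_const, Finset.card_univ, Fintype.card_fin,
          ← Finset.sum_mul]
        push_cast
        ring
    _ ≤ ∑ b, (-∑ n, p b n * Real.logb 2 (p b n)) := hsumall
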